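/- arXiv:2007.04202 — 4 statements merged into one kernel-verified Lean document; each statement's English description precedes it below -/
import Mathlib

section
/- Suppose that for each i the map ξ_i is L_i-Lipschitz and its Jacobian J_i is S_i-Lipschitz in the spectral norm (‖J_i(x) − J_i(y)‖ ≤ S_i‖x − y‖ for all x, y), and that there is C > 0 with (1/n)∑_{i=1}^n ‖ξ_i(x)‖ ≤ C for all x ∈ ℝ^d. Then the Hamiltonian H is L_H-smooth with L_H = S̄C + L̄², where S̄ = (1/n)∑_{i=1}^n S_i and L̄ = (1/n)∑_{i=1}^n L_i: that is, ‖∇H(x) − ∇H(y)‖ ≤ (S̄C + L̄²)‖x − y‖ for all x, y ∈ ℝ^d. -/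
/-!
STATEMENT 2: If each ξ_i is L_i-Lipschitz with S_i-Lipschitz Jacobian (spectral norm)
and (1/n)∑‖ξ_i(x)‖ ≤ C, then the Hamiltonian H = ½‖(1/n)∑ξ_i‖² is (S̄C + L̄²)-smooth,
where S̄ = (1/n)∑S_i and L̄ = (1/n)∑L_i.
-/

open scoped RealInnerProductSpace BigOperators

noncomputable section

/-- The signed gradient field ξ(x) = (∇_{x1} g(x), −∇_{x2} g(x)) of a payoff g. -/
def xi {d1 d2 : ℕ} (g : EuclideanSpace ℝ (Fin d1 ⊕ Fin d2) → ℝ)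
    (x : EuclideanSpace ℝ (Fin d1 ⊕ Fin d2)) : EuclideanSpace ℝ (Fin d1 ⊕ Fin d2) :=
  (WithLp.equiv 2 _).symm (Sum.elim
    (fun a => gradient g x (Sum.inl a))
    (fun j => -(gradient g x (Sum.inr j))))

/-- The Hamiltonian H(x) = ½‖(1/n)∑ᵢ ξᵢ(x)‖². -/
def Ham {n d1 d2 : ℕ} (g : Fin n → EuclideanSpace ℝ (Fin d1 ⊕ Fin d2) → ℝ)
    (x : EuclideanSpace ℝ (Fin d1 ⊕ Fin d2)) : ℝ :=
  (1 / 2 : ℝ) * ‖(n : ℝ)⁻¹ • ∑ i, xi (g i) x‖ ^ 2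

/-- The sign-flip on the second block, as a linear isometry equivalence. -/
def negSnd (d1 d2 : ℕ) :
    EuclideanSpace ℝ (Fin d1 ⊕ Fin d2) ≃ₗᵢ[ℝ] EuclideanSpace ℝ (Fin d1 ⊕ Fin d2) :=
  LinearIsometryEquiv.piLpCongrRight 2
    (fun s => Sum.rec (fun _ => LinearIsometryEquiv.refl ℝ ℝ)
      (fun _ => LinearIsometryEquiv.neg ℝ) s)

lemma xi_eq {d1 d2 : ℕ} (g : EuclideanSpace ℝ (Fin d1 ⊕ Fin d2) → ℝ)
    (x : EuclideanSpace ℝ (Fin d1 ⊕ Fin d2)) :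
    xi g x = negSnd d1 d2 (gradient g x) := by
  ext s
  cases s <;>
    simp [xi, negSnd, LinearIsometryEquiv.piLpCongrRight_apply]

lemma diff_xi {d1 d2 : ℕ} (g : EuclideanSpace ℝ (Fin d1 ⊕ Fin d2) → ℝ)
    (hg : ContDiff ℝ 2 g) : Differentiable ℝ (xi g) := by
  have h1 : Differentiable ℝ (fun x => fderiv ℝ g x) :=
    (hg.fderiv_right (m := 1) (by norm_num)).differentiable (by norm_num)
  have h2 : Differentiable ℝ (gradient g) := by
    have : gradient g = fun x =>
        (InnerProductSpace.toDual ℝ (EuclideanSpace ℝ (Fin d1 ⊕ Fin d2))).symm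
          (fderiv ℝ g x) := rfl
    rw [this]
    exact (InnerProductSpace.toDual ℝ _).symm.differentiable.comp h1
  have : xi g = fun x => negSnd d1 d2 (gradient g x) := funext (xi_eq g)
  rw [this]
  exact (negSnd d1 d2).differentiable.comp h2

set_option maxHeartbeats 1000000 in
theorem hamiltonian_smoothness
    {n d1 d2 : ℕ} (hn : 0 < n)
    (g : Fin n → EuclideanSpace ℝ (Fin d1 ⊕ Fin d2) → ℝ)
    (hg : ∀ i, ContDiff ℝ 2 (g i))
    (L S : Fin n → ℝ) (C : ℝ) (hC : 0 < C)
    (hLip : ∀ i x y, ‖xi (g i) x - xi (g i) y‖ ≤ L i * ‖x - y‖)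
    (hJLip : ∀ i x y,
      ‖fderiv ℝ (xi (g i)) x - fderiv ℝ (xi (g i)) y‖ ≤ S i * ‖x - y‖)
    (hBound : ∀ x, (n : ℝ)⁻¹ * ∑ i, ‖xi (g i) x‖ ≤ C) :
    ∀ x y, ‖gradient (Ham g) x - gradient (Ham g) y‖
      ≤ (((n : ℝ)⁻¹ * ∑ i, S i) * C + ((n : ℝ)⁻¹ * ∑ i, L i) ^ 2) * ‖x - y‖ := by
  intro x y
  by_cases hE : IsEmpty (Fin d1 ⊕ Fin d2)
  · haveI : Subsingleton (EuclideanSpace ℝ (Fin d1 ⊕ Fin d2)) :=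
      ⟨fun a b => PiLp.ext fun s => hE.elim s⟩
    have hxy : x = y := Subsingleton.elim x y
    simp [hxy]
  · rw [not_isEmpty_iff] at hE
    set v : EuclideanSpace ℝ (Fin d1 ⊕ Fin d2) :=
      EuclideanSpace.single hE.some (1 : ℝ) with hv
    have hvnorm : ‖v‖ = 1 := by simp [hv, EuclideanSpace.norm_single]
    have hL0 : ∀ i, 0 ≤ L i := by
      intro i
      have h := hLip i v 0
      simp only [sub_zero, hvnorm, mul_one] at h
      exact le_trans (norm_nonneg _) h
    have hS0 : ∀ i, 0 ≤ S i := by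
      intro i
      have h := hJLip i v 0
      simp only [sub_zero, hvnorm, mul_one] at h
      exact le_trans (norm_nonneg _) h
    have hninv : (0:ℝ) ≤ (n : ℝ)⁻¹ := by positivity
    set Ξ : EuclideanSpace ℝ (Fin d1 ⊕ Fin d2) → EuclideanSpace ℝ (Fin d1 ⊕ Fin d2) :=
      fun z => (n : ℝ)⁻¹ • ∑ i, xi (g i) z with hΞdef
    have hXiDiff : ∀ i, Differentiable ℝ (xi (g i)) := fun i => diff_xi (g i) (hg i)
    have hsumDiff : Differentiable ℝ (fun z => ∑ i, xi (g i) z) :=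
      Differentiable.fun_sum fun i _ => hXiDiff i
    have hΞdiff : Differentiable ℝ Ξ := hsumDiff.fun_const_smul _
    have hA : ∀ z, fderiv ℝ Ξ z = (n : ℝ)⁻¹ • ∑ i, fderiv ℝ (xi (g i)) z := by
      intro z
      rw [hΞdef]
      rw [fderiv_fun_const_smul (hsumDiff z), fderiv_fun_sum fun i _ => (hXiDiff i) z]
    -- norm of fderiv of each xi
    have hfdnorm : ∀ i z, ‖fderiv ℝ (xi (g i)) z‖ ≤ L i := by
      intro i z
      have hlw : LipschitzWith ⟨L i, hL0 i⟩ (xi (g i)) :=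
        LipschitzWith.of_dist_le_mul fun a b => by
          simp only [dist_eq_norm]; exact hLip i a b
      exact norm_fderiv_le_of_lipschitz ℝ hlw
    set Lb : ℝ := (n : ℝ)⁻¹ * ∑ i, L i with hLb
    set Sb : ℝ := (n : ℝ)⁻¹ * ∑ i, S i with hSb
    have hLb0 : 0 ≤ Lb := mul_nonneg hninv (Finset.sum_nonneg fun i _ => hL0 i)
    have hSb0 : 0 ≤ Sb := mul_nonneg hninv (Finset.sum_nonneg fun i _ => hS0 i)
    have hAL : ∀ z, ‖fderiv ℝ Ξ z‖ ≤ Lb := by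
      intro z
      rw [hA z, norm_smul, Real.norm_eq_abs, abs_of_nonneg hninv, hLb]
      refine mul_le_mul_of_nonneg_left ?_ hninv
      exact le_trans (norm_sum_le _ _) (Finset.sum_le_sum fun i _ => hfdnorm i z)
    have hAS : ‖fderiv ℝ Ξ x - fderiv ℝ Ξ y‖ ≤ Sb * ‖x - y‖ := by
      rw [hA x, hA y]
      erw [← smul_sub]
      rw [← Finset.sum_sub_distrib, norm_smul,
        Real.norm_eq_abs, abs_of_nonneg hninv]
      refine le_trans (mul_le_mul_of_nonneg_left (le_trans (norm_sum_le _ _)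
        (Finset.sum_le_sum fun i _ => hJLip i x y)) hninv) (le_of_eq ?_)
      rw [← Finset.sum_mul, hSb]; ring
    have hΞC : ∀ z, ‖Ξ z‖ ≤ C := by
      intro z
      rw [hΞdef]
      simp only
      rw [norm_smul, Real.norm_eq_abs, abs_of_nonneg hninv]
      exact le_trans (mul_le_mul_of_nonneg_left (norm_sum_le _ _) hninv) (hBound z)
    have hΞL : ‖Ξ x - Ξ y‖ ≤ Lb * ‖x - y‖ := by
      rw [hΞdef]
      simp only
      rw [← smul_sub, ← Finset.sum_sub_distrib, norm_smul,
        Real.norm_eq_abs, abs_of_nonneg hninv]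
      refine le_trans (mul_le_mul_of_nonneg_left (le_trans (norm_sum_le _ _)
        (Finset.sum_le_sum fun i _ => hLip i x y)) hninv) (le_of_eq ?_)
      rw [← Finset.sum_mul, hLb]; ring
    -- gradient formula for Ham
    have hgrad : ∀ z, gradient (Ham g) z
        = (ContinuousLinearMap.adjoint (fderiv ℝ Ξ z)) (Ξ z) := by
      intro z
      have hz : HasFDerivAt Ξ (fderiv ℝ Ξ z) z := (hΞdiff z).hasFDerivAt
      have h1 := (hz.inner ℝ hz).const_mul (1/2 : ℝ)
      have hHam : Ham g = fun t => (1/2 : ℝ) * ⟪Ξ t, Ξ t⟫ := by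
        funext t
        rw [Ham, real_inner_self_eq_norm_sq]
      have h3 : (1/2 : ℝ) • ((fderivInnerCLM ℝ (Ξ z, Ξ z)).comp
            ((fderiv ℝ Ξ z).prod (fderiv ℝ Ξ z)))
          = InnerProductSpace.toDual ℝ _
              ((ContinuousLinearMap.adjoint (fderiv ℝ Ξ z)) (Ξ z)) := by
        ext w
        simp only [ContinuousLinearMap.smul_apply, ContinuousLinearMap.comp_apply,
          ContinuousLinearMap.prod_apply, fderivInnerCLM_apply,
          InnerProductSpace.toDual_apply_apply, ContinuousLinearMap.adjoint_inner_left]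
        rw [real_inner_comm (fderiv ℝ Ξ z w) (Ξ z)]
        ring_nf
      have h4 : HasGradientAt (Ham g)
          ((ContinuousLinearMap.adjoint (fderiv ℝ Ξ z)) (Ξ z)) z := by
        rw [hasGradientAt_iff_hasFDerivAt, ← h3, hHam]
        exact h1
      exact h4.gradient
    rw [hgrad x, hgrad y]
    have key : (ContinuousLinearMap.adjoint (fderiv ℝ Ξ x)) (Ξ x)
          - (ContinuousLinearMap.adjoint (fderiv ℝ Ξ y)) (Ξ y)
        = (ContinuousLinearMap.adjoint (fderiv ℝ Ξ x)
            - ContinuousLinearMap.adjoint (fderiv ℝ Ξ y)) (Ξ x)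
          + (ContinuousLinearMap.adjoint (fderiv ℝ Ξ y)) (Ξ x - Ξ y) := by
      simp only [ContinuousLinearMap.sub_apply, map_sub]
      abel
    rw [key]
    have hadj_sub : ‖ContinuousLinearMap.adjoint (fderiv ℝ Ξ x)
        - ContinuousLinearMap.adjoint (fderiv ℝ Ξ y)‖ = ‖fderiv ℝ Ξ x - fderiv ℝ Ξ y‖ := by
      rw [← map_sub (ContinuousLinearMap.adjoint :
        (EuclideanSpace ℝ (Fin d1 ⊕ Fin d2) →L[ℝ] _) ≃ₗᵢ⋆[ℝ] _)]
      exact LinearIsometryEquiv.norm_map _ _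
    have hadj_y : ‖(ContinuousLinearMap.adjoint (fderiv ℝ Ξ y) :
        EuclideanSpace ℝ (Fin d1 ⊕ Fin d2) →L[ℝ] _)‖ = ‖fderiv ℝ Ξ y‖ :=
      LinearIsometryEquiv.norm_map _ _
    calc ‖(ContinuousLinearMap.adjoint (fderiv ℝ Ξ x)
            - ContinuousLinearMap.adjoint (fderiv ℝ Ξ y)) (Ξ x)
          + (ContinuousLinearMap.adjoint (fderiv ℝ Ξ y)) (Ξ x - Ξ y)‖
        ≤ ‖(ContinuousLinearMap.adjoint (fderiv ℝ Ξ x)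
            - ContinuousLinearMap.adjoint (fderiv ℝ Ξ y)) (Ξ x)‖
          + ‖(ContinuousLinearMap.adjoint (fderiv ℝ Ξ y)) (Ξ x - Ξ y)‖ := norm_add_le _ _
      _ ≤ ‖ContinuousLinearMap.adjoint (fderiv ℝ Ξ x)
            - ContinuousLinearMap.adjoint (fderiv ℝ Ξ y)‖ * ‖Ξ x‖
          + ‖ContinuousLinearMap.adjoint (fderiv ℝ Ξ y)‖ * ‖Ξ x - Ξ y‖ :=
          add_le_add (ContinuousLinearMap.le_opNorm _ _) (ContinuousLinearMap.le_opNorm _ _)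
      _ = ‖fderiv ℝ Ξ x - fderiv ℝ Ξ y‖ * ‖Ξ x‖ + ‖fderiv ℝ Ξ y‖ * ‖Ξ x - Ξ y‖ := by
          rw [hadj_sub, hadj_y]
      _ ≤ (Sb * ‖x - y‖) * C + Lb * (Lb * ‖x - y‖) := by
          refine add_le_add ?_ ?_
          · exact mul_le_mul hAS (hΞC x) (norm_nonneg _)
              (mul_nonneg hSb0 (norm_nonneg _))
          · exact mul_le_mul (hAL y) hΞL (norm_nonneg _) hLb0
      _ = (Sb * C + Lb ^ 2) * ‖x - y‖ := by ring
end
end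

section
/- Let z : ℝ^m → ℝ be differentiable, μ_z-strongly convex, and have an L_z-Lipschitz gradient, and let A ∈ ℝ^{m×n} be a nonzero matrix. Then the function f : ℝ^n → ℝ, f(x) = z(Ax), attains its minimum on a nonempty closed convex set X*, f is L-smooth with L = L_z‖A‖² (where ‖A‖ is the spectral norm), and f is μ-quasi-strongly convex with μ = μ_z σ_min(A)², where σ_min(A) is the smallest nonzero singular value of A: for every x ∈ ℝ^n, writing x̄ for the orthogonal projection of x onto X*, one has f(x̄) ≥ f(x) + ⟨∇f(x), x̄ − x⟩ + (μ/2)‖x̄ − x‖². -/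
/-!
STATEMENT 15: If z is μ_z-strongly convex with L_z-Lipschitz gradient and A ≠ 0, then
f(x) = z(Ax) attains its minimum on a nonempty closed convex set X*, is L-smooth with
L = L_z‖A‖² (spectral norm), and is μ-quasi-strongly convex with μ = μ_z σ_min(A)²
relative to the orthogonal projection onto X*.
-/

open scoped RealInnerProductSpace BigOperators

set_option maxHeartbeats 1000000

noncomputable section

/-- Spectral norm of a matrix: the operator norm of the induced map between
Euclidean spaces. -/
def specNorm {m n : ℕ} (A : Matrix (Fin m) (Fin n) ℝ) : ℝ :=
  ‖LinearMap.toContinuousLinearMap (Matrix.toEuclideanLin A)‖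

/-- Squared smallest nonzero singular value of A, i.e. the smallest nonzero
eigenvalue of Aᵀ A. -/
def sigmaMinSq {m n : ℕ} (A : Matrix (Fin m) (Fin n) ℝ) : ℝ :=
  sInf {t : ℝ | t ≠ 0 ∧ ∃ v : Fin n → ℝ, v ≠ 0 ∧ (A.transpose * A).mulVec v = t • v}

/-- Key spectral estimate: on the orthogonal complement of the kernel of `A`,
`‖Av‖² ≥ σ_min(A)² ‖v‖²`. -/
lemma sigma_key {m n : ℕ} (A : Matrix (Fin m) (Fin n) ℝ)
    (v : EuclideanSpace ℝ (Fin n))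
    (hv : ∀ u : EuclideanSpace ℝ (Fin n), Matrix.toEuclideanLin A u = 0 → ⟪u, v⟫ = 0) :
    sigmaMinSq A * ‖v‖ ^ 2 ≤ ‖Matrix.toEuclideanLin A v‖ ^ 2 := by
  classical
  have hB : (A.transpose * A).IsHermitian := by
    have := Matrix.isHermitian_conjTranspose_mul_self A
    rwa [Matrix.conjTranspose_eq_transpose_of_trivial] at this
  set S : EuclideanSpace ℝ (Fin n) →ₗ[ℝ] EuclideanSpace ℝ (Fin n) :=
    Matrix.toEuclideanLin (A.transpose * A) with hSdef
  have hsymm : S.IsSymmetric := Matrix.isHermitian_iff_isSymmetric.mp hB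
  have hScomp : ∀ w, S w = (LinearMap.adjoint (Matrix.toEuclideanLin A))
      (Matrix.toEuclideanLin A w) := by
    intro w
    rw [← Matrix.toEuclideanLin_conjTranspose_eq_adjoint]
    simp only [hSdef, Matrix.toEuclideanLin_apply, Matrix.conjTranspose_eq_transpose_of_trivial]
    rw [← Matrix.mulVec_mulVec]
  have hSinner : ∀ w, ⟪S w, w⟫ = ‖Matrix.toEuclideanLin A w‖ ^ 2 := by
    intro w
    rw [hScomp, LinearMap.adjoint_inner_left, real_inner_self_eq_norm_sq]
  set b := hB.eigenvectorBasis with hbdef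
  set lam := hB.eigenvalues with hlamdef
  have hSb : ∀ j, S (b j) = lam j • b j := by
    intro j
    have := hB.mulVec_eigenvectorBasis j
    apply (WithLp.equiv 2 (Fin n → ℝ)).injective
    simpa [hSdef, Matrix.toEuclideanLin_apply] using this
  set c : Fin n → ℝ := fun j => ⟪(b j : EuclideanSpace ℝ (Fin n)), v⟫ with hcdef
  have hczero : ∀ j, lam j = 0 → c j = 0 := by
    intro j hj
    apply hv
    have h0 : ‖Matrix.toEuclideanLin A (b j)‖ ^ 2 = 0 := by
      rw [← hSinner, hSb j, hj, zero_smul, inner_zero_left]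
    have := pow_eq_zero_iff (n := 2) (by norm_num) |>.mp h0
    exact norm_eq_zero.mp this
  have hinner_sum : ∀ w w' : EuclideanSpace ℝ (Fin n),
      ⟪w, w'⟫ = ∑ j, ⟪(b j : EuclideanSpace ℝ (Fin n)), w⟫ * ⟪(b j : EuclideanSpace ℝ (Fin n)), w'⟫ := by
    intro w w'
    rw [← b.repr.inner_map_map w w']
    simp only [PiLp.inner_apply, RCLike.inner_apply, conj_trivial,
      OrthonormalBasis.repr_apply_apply]
    exact Finset.sum_congr rfl fun _ _ => mul_comm _ _
  have hnormv : ‖v‖ ^ 2 = ∑ j, c j * c j := by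
    rw [← real_inner_self_eq_norm_sq, hinner_sum v v]
  have hSvj : ∀ j, ⟪(b j : EuclideanSpace ℝ (Fin n)), S v⟫ = lam j * c j := by
    intro j
    rw [← hsymm (b j) v, hSb j, inner_smul_left]
    simp [hcdef, conj_trivial]
  have hSvv : ⟪S v, v⟫ = ∑ j, lam j * c j * c j := by
    rw [real_inner_comm, hinner_sum v (S v)]
    refine Finset.sum_congr rfl fun j _ => ?_
    rw [hSvj j]; ring
  have hbdd : BddBelow {t : ℝ | t ≠ 0 ∧ ∃ v : Fin n → ℝ, v ≠ 0 ∧ (A.transpose * A).mulVec v = t • v} := by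
    refine ⟨0, fun t ht => ?_⟩
    obtain ⟨htne, w, hwne, hw⟩ := ht
    have hpsd := Matrix.posSemidef_conjTranspose_mul_self A
    rw [Matrix.conjTranspose_eq_transpose_of_trivial] at hpsd
    have h1 := hpsd.dotProduct_mulVec_nonneg w
    rw [hw] at h1
    simp only [dotProduct_smul, star_trivial, smul_eq_mul] at h1
    have h2 : 0 < dotProduct w w := by
      rcases lt_or_eq_of_le (Finset.sum_nonneg fun i _ => mul_self_nonneg (w i) :
          (0:ℝ) ≤ dotProduct w w) with h | h
      · exact h
      · exact absurd ((dotProduct_self_eq_zero).mp h.symm) hwne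
    nlinarith
  have hmain : ∑ j, sigmaMinSq A * (c j * c j) ≤ ∑ j, lam j * c j * c j := by
    refine Finset.sum_le_sum fun j _ => ?_
    by_cases hj : lam j = 0
    · rw [hczero j hj, hj]; simp
    · have hmem : lam j ∈ {t : ℝ | t ≠ 0 ∧ ∃ v : Fin n → ℝ, v ≠ 0 ∧ (A.transpose * A).mulVec v = t • v} := by
        refine ⟨hj, ⇑(b j), ?_, hB.mulVec_eigenvectorBasis j⟩
        intro h0
        have hb0 : (b j : EuclideanSpace ℝ (Fin n)) = 0 := by
          ext i; exact congrFun h0 i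
        exact b.orthonormal.ne_zero j hb0
      have hle : sigmaMinSq A ≤ lam j := csInf_le hbdd hmem
      have := mul_le_mul_of_nonneg_right hle (mul_self_nonneg (c j))
      linarith [this]
  calc sigmaMinSq A * ‖v‖ ^ 2 = ∑ j, sigmaMinSq A * (c j * c j) := by
        rw [hnormv, Finset.mul_sum]
    _ ≤ ∑ j, lam j * c j * c j := hmain
    _ = ‖Matrix.toEuclideanLin A v‖ ^ 2 := by rw [← hSvv, hSinner v]

/-- Gradient of the composition with a linear map. -/
lemma grad_comp {m n : ℕ} (z : EuclideanSpace ℝ (Fin m) → ℝ) (hz : Differentiable ℝ z)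
    (A : Matrix (Fin m) (Fin n) ℝ) (x : EuclideanSpace ℝ (Fin n)) :
    HasGradientAt (fun x => z (Matrix.toEuclideanLin A x))
      ((LinearMap.toContinuousLinearMap (Matrix.toEuclideanLin A)).adjoint
        (gradient z (Matrix.toEuclideanLin A x))) x := by
  set T := LinearMap.toContinuousLinearMap (Matrix.toEuclideanLin A) with hT
  have hg : HasGradientAt z (gradient z (T x)) (T x) := (hz (T x)).hasGradientAt
  rw [hasGradientAt_iff_hasFDerivAt] at hg ⊢
  have hcomp := hg.comp x (T.hasFDerivAt (x := x))
  have heq : (InnerProductSpace.toDual ℝ _ (T.adjoint (gradient z (T x)))) =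
      (InnerProductSpace.toDual ℝ _ (gradient z (T x))).comp T := by
    ext v
    simp [InnerProductSpace.toDual_apply_apply, ContinuousLinearMap.adjoint_inner_left]
  rw [show (Matrix.toEuclideanLin A) x = T x from rfl, heq]
  exact hcomp

theorem quasi_strong_convexity_of_composition
    {m n : ℕ} (z : EuclideanSpace ℝ (Fin m) → ℝ)
    (hzdiff : Differentiable ℝ z)
    (μz Lz : ℝ) (hμz : 0 < μz) (hLz : 0 < Lz)
    (hzsc : ∀ x y, z x + ⟪gradient z x, y - x⟫ + μz / 2 * ‖y - x‖ ^ 2 ≤ z y)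
    (hzlip : ∀ x y, ‖gradient z x - gradient z y‖ ≤ Lz * ‖x - y‖)
    (A : Matrix (Fin m) (Fin n) ℝ) (hA : A ≠ 0)
    (f : EuclideanSpace ℝ (Fin n) → ℝ)
    (hf : f = fun x => z (Matrix.toEuclideanLin A x))
    (Xstar : Set (EuclideanSpace ℝ (Fin n)))
    (hXstar : Xstar = {x | ∀ y, f x ≤ f y}) :
    Xstar.Nonempty ∧ IsClosed Xstar ∧ Convex ℝ Xstar ∧
    (∀ x y, ‖gradient f x - gradient f y‖ ≤ Lz * specNorm A ^ 2 * ‖x - y‖) ∧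
    (∀ x xbar, xbar ∈ Xstar → (∀ y ∈ Xstar, ‖x - xbar‖ ≤ ‖x - y‖) →
      f x + ⟪gradient f x, xbar - x⟫ + μz * sigmaMinSq A / 2 * ‖xbar - x‖ ^ 2
        ≤ f xbar) := by
  subst hf hXstar
  set T := LinearMap.toContinuousLinearMap (Matrix.toEuclideanLin A) with hTdef
  have hgrad : ∀ x, gradient (fun x => z (Matrix.toEuclideanLin A x)) x =
      T.adjoint (gradient z (Matrix.toEuclideanLin A x)) :=
    fun x => (grad_comp z hzdiff A x).gradient
  have hip : ∀ p q : EuclideanSpace ℝ (Fin n),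
      ⟪gradient (fun x => z (Matrix.toEuclideanLin A x)) p, q - p⟫ =
      ⟪gradient z (Matrix.toEuclideanLin A p),
        Matrix.toEuclideanLin A q - Matrix.toEuclideanLin A p⟫ := by
    intro p q
    rw [hgrad p, ContinuousLinearMap.adjoint_inner_left]
    rw [show (T (q - p) : EuclideanSpace ℝ (Fin m)) =
      Matrix.toEuclideanLin A q - Matrix.toEuclideanLin A p from by
        rw [map_sub]; rfl]
  have hgradle : ∀ p q : EuclideanSpace ℝ (Fin n),
      z (Matrix.toEuclideanLin A p) +
        ⟪gradient (fun x => z (Matrix.toEuclideanLin A x)) p, q - p⟫ ≤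
        z (Matrix.toEuclideanLin A q) := by
    intro p q
    have h := hzsc (Matrix.toEuclideanLin A p) (Matrix.toEuclideanLin A q)
    have h2 : 0 ≤ μz / 2 * ‖Matrix.toEuclideanLin A q - Matrix.toEuclideanLin A p‖ ^ 2 := by
      positivity
    rw [hip p q]
    linarith
  refine ⟨?_, ?_, ?_, ?_, ?_⟩
  · -- Nonempty
    set SR : Submodule ℝ (EuclideanSpace ℝ (Fin m)) :=
      LinearMap.range (Matrix.toEuclideanLin A) with hSRdef
    haveI : Nonempty SR := ⟨0⟩
    have hlow : ∀ w : SR, z 0 + (-‖gradient z 0‖ * ‖w‖ + μz/2 * ‖w‖^2) ≤ z ↑w := by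
      intro w
      have h := hzsc 0 (↑w)
      rw [sub_zero] at h
      have h2 : -(‖gradient z 0‖ * ‖(w : EuclideanSpace ℝ (Fin m))‖) ≤
          ⟪gradient z 0, (w : EuclideanSpace ℝ (Fin m))⟫ :=
        (abs_le.mp (abs_real_inner_le_norm (gradient z 0) _)).1
      have hnw : ‖(w : EuclideanSpace ℝ (Fin m))‖ = ‖w‖ := rfl
      rw [hnw] at h2 h
      linarith
    have hphi : Filter.Tendsto (fun r : ℝ => z 0 + (-‖gradient z 0‖ * r + μz/2 * r^2))
        Filter.atTop Filter.atTop := by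
      apply Filter.tendsto_atTop_add_const_left
      have heq : (fun r : ℝ => -‖gradient z 0‖ * r + μz/2 * r^2) =
          fun r : ℝ => r * (-‖gradient z 0‖ + μz/2 * r) := by funext r; ring
      rw [heq]
      exact Filter.Tendsto.atTop_mul_atTop₀ Filter.tendsto_id
        (Filter.tendsto_atTop_add_const_left _ _
          (Filter.Tendsto.const_mul_atTop (half_pos hμz) Filter.tendsto_id))
    have hcoer : Filter.Tendsto (fun w : SR => z ↑w) (Filter.cocompact SR) Filter.atTop :=
      Filter.tendsto_atTop_mono hlow (hphi.comp tendsto_norm_cocompact_atTop)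
    have hcont : Continuous (fun w : SR => z ↑w) :=
      hzdiff.continuous.comp continuous_subtype_val
    obtain ⟨w0, hw0⟩ := hcont.exists_forall_le hcoer
    obtain ⟨x0, hx0⟩ := w0.2
    refine ⟨x0, ?_⟩
    simp only [Set.mem_setOf_eq]
    intro y
    show z (Matrix.toEuclideanLin A x0) ≤ z (Matrix.toEuclideanLin A y)
    rw [hx0]
    exact hw0 ⟨Matrix.toEuclideanLin A y, LinearMap.mem_range_self _ y⟩
  · -- Closed
    have : {x : EuclideanSpace ℝ (Fin n) | ∀ y, z (Matrix.toEuclideanLin A x) ≤ z (Matrix.toEuclideanLin A y)}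
        = ⋂ y, {x | z (Matrix.toEuclideanLin A x) ≤ z (Matrix.toEuclideanLin A y)} := by
      ext w; simp [Set.mem_iInter]
    rw [show {x : EuclideanSpace ℝ (Fin n) | ∀ (y : EuclideanSpace ℝ (Fin n)),
        (fun x => z (Matrix.toEuclideanLin A x)) x ≤ (fun x => z (Matrix.toEuclideanLin A x)) y} =
        ⋂ y, {x | z (Matrix.toEuclideanLin A x) ≤ z (Matrix.toEuclideanLin A y)} from this]
    exact isClosed_iInter fun y =>
      isClosed_le (hzdiff.continuous.comp T.continuous) continuous_const
  · -- Convex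
    intro x₁ h1 x₂ h2 a bb ha hb hab
    simp only [Set.mem_setOf_eq] at h1 h2 ⊢
    intro y
    set p := a • x₁ + bb • x₂ with hpdef
    have hzero : a • (x₁ - p) + bb • (x₂ - p) = 0 := by
      have h3 : a • p + bb • p = p := by rw [← add_smul, hab, one_smul]
      rw [smul_sub, smul_sub]
      rw [show a • x₁ - a • p + (bb • x₂ - bb • p) = (a • x₁ + bb • x₂) - (a • p + bb • p) from by abel,
        h3, hpdef, sub_self]
    set gp := gradient (fun x => z (Matrix.toEuclideanLin A x)) p with hgp
    have hinz : a * ⟪gp, x₁ - p⟫ + bb * ⟪gp, x₂ - p⟫ = 0 := by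
      rw [← real_inner_smul_right, ← real_inner_smul_right, ← inner_add_right, hzero,
        inner_zero_right]
    have e1 := hgradle p x₁
    have e2 := hgradle p x₂
    have e3 : z (Matrix.toEuclideanLin A x₁) ≤ z (Matrix.toEuclideanLin A y) := h1 y
    have e4 : z (Matrix.toEuclideanLin A x₂) ≤ z (Matrix.toEuclideanLin A y) := h2 y
    have c1 := mul_le_mul_of_nonneg_left e1 ha
    have c2 := mul_le_mul_of_nonneg_left e2 hb
    have c3 := mul_le_mul_of_nonneg_left e3 ha
    have c4 := mul_le_mul_of_nonneg_left e4 hb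
    have hzp : a * z (Matrix.toEuclideanLin A p) + bb * z (Matrix.toEuclideanLin A p)
        = z (Matrix.toEuclideanLin A p) := by rw [← add_mul, hab, one_mul]
    have hzy : a * z (Matrix.toEuclideanLin A y) + bb * z (Matrix.toEuclideanLin A y)
        = z (Matrix.toEuclideanLin A y) := by rw [← add_mul, hab, one_mul]
    show z (Matrix.toEuclideanLin A p) ≤ z (Matrix.toEuclideanLin A y)
    nlinarith [c1, c2, c3, c4, hzp, hzy, hinz]
  · -- Lipschitz gradient
    intro x y
    rw [hgrad x, hgrad y, ← map_sub]
    have hadj : ‖(ContinuousLinearMap.adjoint T : _)‖ = ‖T‖ :=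
      LinearIsometryEquiv.norm_map ContinuousLinearMap.adjoint T
    have h1 := (ContinuousLinearMap.adjoint T).le_opNorm
      (gradient z (Matrix.toEuclideanLin A x) - gradient z (Matrix.toEuclideanLin A y))
    have h2 := hzlip (Matrix.toEuclideanLin A x) (Matrix.toEuclideanLin A y)
    have h3 : ‖Matrix.toEuclideanLin A x - Matrix.toEuclideanLin A y‖ ≤ ‖T‖ * ‖x - y‖ := by
      have := T.le_opNorm (x - y)
      rw [map_sub] at this
      exact this
    have hT0 : (0:ℝ) ≤ ‖T‖ := norm_nonneg _
    have hspec : specNorm A = ‖T‖ := rfl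
    calc ‖(ContinuousLinearMap.adjoint T)
          (gradient z (Matrix.toEuclideanLin A x) - gradient z (Matrix.toEuclideanLin A y))‖
        ≤ ‖T‖ * ‖gradient z (Matrix.toEuclideanLin A x) - gradient z (Matrix.toEuclideanLin A y)‖ := by
          rw [← hadj]; exact h1
      _ ≤ ‖T‖ * (Lz * ‖Matrix.toEuclideanLin A x - Matrix.toEuclideanLin A y‖) :=
          mul_le_mul_of_nonneg_left h2 hT0
      _ ≤ ‖T‖ * (Lz * (‖T‖ * ‖x - y‖)) :=
          mul_le_mul_of_nonneg_left (mul_le_mul_of_nonneg_left h3 hLz.le) hT0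
      _ = Lz * specNorm A ^ 2 * ‖x - y‖ := by rw [hspec]; ring
  · -- quasi-strong convexity
    intro x xbar hxs hmin
    simp only [Set.mem_setOf_eq] at hxs
    have horth : ∀ u : EuclideanSpace ℝ (Fin n), Matrix.toEuclideanLin A u = 0 →
        ⟪u, xbar - x⟫ = 0 := by
      intro u hu
      by_cases hu0 : u = 0
      · subst hu0; simp
      have hdist : ∀ t : ℝ, ‖x - xbar‖ ≤ ‖x - (xbar + t • u)‖ := by
        intro t
        apply hmin
        simp only [Set.mem_setOf_eq]
        intro y
        show z (Matrix.toEuclideanLin A (xbar + t • u)) ≤ z (Matrix.toEuclideanLin A y)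
        rw [map_add, map_smul, hu, smul_zero, add_zero]
        exact hxs y
      set cc := ⟪u, x - xbar⟫ with hccdef
      have key : ∀ t : ℝ, 0 ≤ -2*t*cc + t^2 * ‖u‖^2 := by
        intro t
        have h := hdist t
        have hrw : x - (xbar + t • u) = (x - xbar) - t • u := by abel
        have h2 : ‖x - (xbar + t • u)‖^2 =
            ‖x - xbar‖^2 - 2*(t*cc) + t^2*‖u‖^2 := by
          rw [hrw, norm_sub_sq_real, real_inner_smul_right, real_inner_comm, norm_smul,
            Real.norm_eq_abs, mul_pow, sq_abs, ← hccdef]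
        have h3 : ‖x - xbar‖^2 ≤ ‖x - (xbar + t • u)‖^2 :=
          pow_le_pow_left₀ (norm_nonneg _) h 2
        linarith
      have hu2 : (0:ℝ) < ‖u‖^2 := by
        have : 0 < ‖u‖ := norm_pos_iff.mpr hu0
        positivity
      have hcc : cc = 0 := by
        have hk := key (cc / ‖u‖^2)
        have hexp : -2*(cc / ‖u‖^2)*cc + (cc / ‖u‖^2)^2 * ‖u‖^2 = -(cc^2/‖u‖^2) := by
          field_simp
          ring
        rw [hexp] at hk
        have : cc^2 ≤ 0 := by
          by_contra hpos
          push_neg at hpos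
          have := div_pos hpos hu2
          linarith
        nlinarith [sq_nonneg cc]
      rw [show xbar - x = -(x - xbar) from by abel, inner_neg_right, ← hccdef, hcc, neg_zero]
    have hkey := sigma_key A (xbar - x) horth
    rw [map_sub] at hkey
    have hsc := hzsc (Matrix.toEuclideanLin A x) (Matrix.toEuclideanLin A xbar)
    have hip2 := hip x xbar
    have hmu2 := mul_le_mul_of_nonneg_left hkey (le_of_lt (half_pos hμz))
    simp only
    nlinarith [hsc, hip2, hmu2]

end
end

section
/- Let f = (1/N)∑_{m=1}^N f_m with each f_m : ℝ^d → ℝ differentiable, and let x* be a minimizer of f (so ∇f(x*) = 0). If the expected residual condition holds with constant ρ > 0, i.e. (1/N)∑_{m=1}^N ‖∇f_m(x) − ∇f_m(x*) − (∇f(x) − ∇f(x*))‖² ≤ 2ρ(f(x) − f(x*)) for all x ∈ ℝ^d, then for all x ∈ ℝ^d, (1/N)∑_{m=1}^N ‖∇f_m(x)‖² ≤ 4ρ(f(x) − f(x*)) + ‖∇f(x)‖² + 2σ², where σ² = (1/N)∑_{m=1}^N ‖∇f_m(x*)‖². -/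
/-!
STATEMENT 17: Under the expected residual condition with constant ρ at a minimizer x*
of f = (1/N)∑f_m: (1/N)∑‖∇f_m(x)‖² ≤ 4ρ(f(x) − f(x*)) + ‖∇f(x)‖² + 2σ², where
σ² = (1/N)∑‖∇f_m(x*)‖².
-/

open scoped RealInnerProductSpace BigOperators

noncomputable section

/-- The average f = (1/N) ∑ₘ fₘ. -/
def favg {N d : ℕ} (f : Fin N → EuclideanSpace ℝ (Fin d) → ℝ)
    (x : EuclideanSpace ℝ (Fin d)) : ℝ :=
  (N : ℝ)⁻¹ * ∑ m, f m x

theorem gradient_bound_of_expected_residual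
    {N d : ℕ} (hN : 0 < N) (f : Fin N → EuclideanSpace ℝ (Fin d) → ℝ)
    (hdiff : ∀ m, Differentiable ℝ (f m))
    (xstar : EuclideanSpace ℝ (Fin d)) (hmin : ∀ y, favg f xstar ≤ favg f y)
    (ρ : ℝ) (hρ : 0 < ρ)
    (hER : ∀ x, (N : ℝ)⁻¹ * ∑ m,
        ‖gradient (f m) x - gradient (f m) xstar
          - (gradient (favg f) x - gradient (favg f) xstar)‖ ^ 2
      ≤ 2 * ρ * (favg f x - favg f xstar)) :
    ∀ x, (N : ℝ)⁻¹ * ∑ m, ‖gradient (f m) x‖ ^ 2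
      ≤ 4 * ρ * (favg f x - favg f xstar) + ‖gradient (favg f) x‖ ^ 2
        + 2 * ((N : ℝ)⁻¹ * ∑ m, ‖gradient (f m) xstar‖ ^ 2) := by
  intro x
  have hNR : (N : ℝ) ≠ 0 := Nat.cast_ne_zero.mpr hN.ne'
  have hNinv : (0 : ℝ) < (N : ℝ)⁻¹ := by positivity
  -- differentiability of the sum
  have hsumdiff : Differentiable ℝ (fun y : EuclideanSpace ℝ (Fin d) => ∑ m, f m y) :=
    Differentiable.fun_sum fun m _ => hdiff m
  have hfavgdiff : Differentiable ℝ (favg f) := by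
    have : favg f = fun y => (N : ℝ)⁻¹ * ∑ m, f m y := rfl
    rw [this]
    exact hsumdiff.const_mul _
  -- gradient of the average is the average of gradients
  have grad_avg : ∀ y, gradient (favg f) y = (N : ℝ)⁻¹ • ∑ m, gradient (f m) y := by
    intro y
    have h1 : fderiv ℝ (favg f) y = (N : ℝ)⁻¹ • ∑ m, fderiv ℝ (f m) y := by
      have : favg f = fun z => (N : ℝ)⁻¹ * ∑ m, f m z := rfl
      rw [this, fderiv_const_mul (hsumdiff y), fderiv_fun_sum (fun m _ => (hdiff m) y)]
    simp only [gradient, h1, map_smul, map_sum]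
  -- gradient of the average vanishes at the minimizer
  have gstar : gradient (favg f) xstar = 0 := by
    have hloc : IsLocalMin (favg f) xstar :=
      Filter.Eventually.of_forall (fun y => hmin y)
    simp [gradient, hloc.fderiv_eq_zero]
  set g := gradient (favg f) x with hg
  set a : Fin N → EuclideanSpace ℝ (Fin d) := fun m => gradient (f m) x with ha
  set b : Fin N → EuclideanSpace ℝ (Fin d) := fun m => gradient (f m) xstar with hb
  -- the centered gradients sum to zero
  have hsum0 : ∑ m, (a m - g) = 0 := by
    have : ∑ m, a m = (N : ℝ) • g := by
      rw [hg, grad_avg x, smul_smul, mul_inv_cancel₀ hNR, one_smul]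
    rw [Finset.sum_sub_distrib, this, Finset.sum_const, Finset.card_univ,
      Fintype.card_fin, ← Nat.cast_smul_eq_nsmul ℝ, sub_self]
  -- expand ‖a m‖² = ‖a m - g‖² + 2⟪a m - g, g⟫ + ‖g‖² and sum
  have hexp : ∑ m, ‖a m‖ ^ 2 = ∑ m, ‖a m - g‖ ^ 2 + (N : ℝ) * ‖g‖ ^ 2 := by
    have h1 : ∀ m : Fin N, ‖a m‖ ^ 2 = ‖a m - g‖ ^ 2 + 2 * ⟪a m - g, g⟫ + ‖g‖ ^ 2 := by
      intro m
      have h := norm_add_sq_real (a m - g) g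
      rw [sub_add_cancel] at h
      exact h
    have h2 : ∑ m, 2 * ⟪a m - g, g⟫ = (0 : ℝ) := by
      rw [← Finset.mul_sum, ← sum_inner, hsum0, inner_zero_left, mul_zero]
    rw [Finset.sum_congr rfl (fun m _ => h1 m), Finset.sum_add_distrib,
      Finset.sum_add_distrib, h2, add_zero, Finset.sum_const, Finset.card_univ,
      Fintype.card_fin, nsmul_eq_mul]
  -- pointwise bound: ‖a m - g‖² ≤ 2‖a m - b m - g‖² + 2‖b m‖²
  have hptwise : ∀ m : Fin N, ‖a m - g‖ ^ 2 ≤ 2 * ‖a m - b m - g‖ ^ 2 + 2 * ‖b m‖ ^ 2 := by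
    intro m
    have h3 : a m - g = (a m - b m - g) + b m := by abel
    have h4 : ‖(a m - b m - g) + b m‖ ≤ ‖a m - b m - g‖ + ‖b m‖ := norm_add_le _ _
    have h5 : (0 : ℝ) ≤ ‖(a m - b m - g) + b m‖ := norm_nonneg _
    rw [h3]
    nlinarith [norm_nonneg (a m - b m - g), norm_nonneg (b m), sq_nonneg (‖a m - b m - g‖ - ‖b m‖)]
  -- the expected residual bound with g* = 0
  have hER' : (N : ℝ)⁻¹ * ∑ m, ‖a m - b m - g‖ ^ 2 ≤ 2 * ρ * (favg f x - favg f xstar) := by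
    have := hER x
    rw [gstar, sub_zero] at this
    exact this
  have hsumle : ∑ m, ‖a m - g‖ ^ 2 ≤ ∑ m, (2 * ‖a m - b m - g‖ ^ 2 + 2 * ‖b m‖ ^ 2) :=
    Finset.sum_le_sum fun m _ => hptwise m
  have key : (N : ℝ)⁻¹ * ∑ m, ‖a m - g‖ ^ 2
      ≤ 2 * ((N : ℝ)⁻¹ * ∑ m, ‖a m - b m - g‖ ^ 2) + 2 * ((N : ℝ)⁻¹ * ∑ m, ‖b m‖ ^ 2) := by
    have := mul_le_mul_of_nonneg_left hsumle (le_of_lt hNinv)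
    calc (N : ℝ)⁻¹ * ∑ m, ‖a m - g‖ ^ 2
        ≤ (N : ℝ)⁻¹ * ∑ m, (2 * ‖a m - b m - g‖ ^ 2 + 2 * ‖b m‖ ^ 2) := this
      _ = 2 * ((N : ℝ)⁻¹ * ∑ m, ‖a m - b m - g‖ ^ 2) + 2 * ((N : ℝ)⁻¹ * ∑ m, ‖b m‖ ^ 2) := by
          rw [Finset.sum_add_distrib, ← Finset.mul_sum, ← Finset.mul_sum]; ring
  have hfinal : (N : ℝ)⁻¹ * ∑ m, ‖a m‖ ^ 2 = (N : ℝ)⁻¹ * ∑ m, ‖a m - g‖ ^ 2 + ‖g‖ ^ 2 := by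
    rw [hexp, mul_add, ← mul_assoc, inv_mul_cancel₀ hNR, one_mul]
  rw [hfinal]
  have := hER'
  linarith [key, hER']
end
end

section
/- Let f = (1/N)∑_{m=1}^N f_m with each f_m : ℝ^d → ℝ differentiable, and let x* be a minimizer of f. If the expected smoothness condition holds with constant ℒ > 0, i.e. (1/N)∑_{m=1}^N ‖∇f_m(x) − ∇f_m(x*)‖² ≤ 2ℒ(f(x) − f(x*)) for all x, then the expected residual condition holds with the same constant: (1/N)∑_{m=1}^N ‖∇f_m(x) − ∇f_m(x*) − (∇f(x) − ∇f(x*))‖² ≤ 2ℒ(f(x) − f(x*)) for all x. If moreover f satisfies the Polyak–Łojasiewicz condition with constant μ relative to f* = f(x*), then the expected residual condition holds with the improved constant ℒ − μ: (1/N)∑_{m=1}^N ‖∇f_m(x) − ∇f_m(x*) − (∇f(x) − ∇f(x*))‖² ≤ 2(ℒ − μ)(f(x) − f(x*)) for all x. -/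
/-!
STATEMENT 18: Expected smoothness with constant ℒ implies the expected residual
condition with the same constant ℒ; if moreover f satisfies the PL condition with
constant μ, the expected residual condition holds with the improved constant ℒ − μ.
-/

open scoped RealInnerProductSpace BigOperators

noncomputable section

lemma favg_hasGradientAt {N d : ℕ} (f : Fin N → EuclideanSpace ℝ (Fin d) → ℝ)
    (hdiff : ∀ m, Differentiable ℝ (f m)) (x : EuclideanSpace ℝ (Fin d)) :
    HasGradientAt (favg f) ((N:ℝ)⁻¹ • ∑ m, gradient (f m) x) x := by
  rw [hasGradientAt_iff_hasFDerivAt]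
  have h1 : ∀ m : Fin N, HasFDerivAt (f m)
      (InnerProductSpace.toDual ℝ _ (gradient (f m) x)) x :=
    fun m => ((hdiff m x).hasGradientAt).hasFDerivAt
  have hsum : HasFDerivAt (fun y => ∑ m, f m y)
      (∑ m, InnerProductSpace.toDual ℝ _ (gradient (f m) x)) x :=
    HasFDerivAt.fun_sum fun m _ => h1 m
  have h2 := hsum.const_mul (N:ℝ)⁻¹
  convert h2 using 1
  · rfl
  · rfl
  simp [map_smul, map_sum]

theorem expected_residual_of_expected_smoothness
    {N d : ℕ} (hN : 0 < N) (f : Fin N → EuclideanSpace ℝ (Fin d) → ℝ)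
    (hdiff : ∀ m, Differentiable ℝ (f m))
    (xstar : EuclideanSpace ℝ (Fin d)) (hmin : ∀ y, favg f xstar ≤ favg f y)
    (ℒ : ℝ) (hℒ : 0 < ℒ)
    (hES : ∀ x, (N : ℝ)⁻¹ * ∑ m, ‖gradient (f m) x - gradient (f m) xstar‖ ^ 2
      ≤ 2 * ℒ * (favg f x - favg f xstar)) :
    (∀ x, (N : ℝ)⁻¹ * ∑ m,
        ‖gradient (f m) x - gradient (f m) xstar
          - (gradient (favg f) x - gradient (favg f) xstar)‖ ^ 2
      ≤ 2 * ℒ * (favg f x - favg f xstar)) ∧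
    (∀ μ : ℝ, 0 < μ →
      (∀ x, μ * (favg f x - favg f xstar) ≤ (1 / 2 : ℝ) * ‖gradient (favg f) x‖ ^ 2) →
      ∀ x, (N : ℝ)⁻¹ * ∑ m,
          ‖gradient (f m) x - gradient (f m) xstar
            - (gradient (favg f) x - gradient (favg f) xstar)‖ ^ 2
        ≤ 2 * (ℒ - μ) * (favg f x - favg f xstar)) := by
  have hNR : (0:ℝ) < (N:ℝ) := by exact_mod_cast hN
  have hgrad : ∀ x, gradient (favg f) x = (N:ℝ)⁻¹ • ∑ m, gradient (f m) x :=
    fun x => (favg_hasGradientAt f hdiff x).gradient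
  -- gradient at minimizer is zero
  have hloc : IsLocalMin (favg f) xstar :=
    IsMinOn.isLocalMin (fun y _ => hmin y) Filter.univ_mem
  have hder : HasGradientAt (favg f) (gradient (favg f) xstar) xstar :=
    (favg_hasGradientAt f hdiff xstar).differentiableAt.hasGradientAt
  have hzero : gradient (favg f) xstar = 0 := by
    have hf0 := hloc.fderiv_eq_zero
    have := hder.hasFDerivAt
    have h1 : HasGradientAt (favg f) 0 xstar := by
      rw [hasGradientAt_iff_hasFDerivAt, map_zero, ← hf0]
      exact hder.differentiableAt.hasFDerivAt
    exact hder.unique h1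
  -- main variance identity
  have key : ∀ x, (N : ℝ)⁻¹ * ∑ m,
        ‖gradient (f m) x - gradient (f m) xstar
          - (gradient (favg f) x - gradient (favg f) xstar)‖ ^ 2
      = (N : ℝ)⁻¹ * (∑ m, ‖gradient (f m) x - gradient (f m) xstar‖ ^ 2)
        - ‖gradient (favg f) x - gradient (favg f) xstar‖ ^ 2 := by
    intro x
    set G : Fin N → EuclideanSpace ℝ (Fin d) :=
      fun m => gradient (f m) x - gradient (f m) xstar with hG
    set g : EuclideanSpace ℝ (Fin d) :=
      gradient (favg f) x - gradient (favg f) xstar with hg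
    have hsumG : ∑ m, G m = (N:ℝ) • g := by
      rw [hg, hgrad x, hgrad xstar, hG]
      rw [smul_sub, smul_inv_smul₀ (ne_of_gt hNR), smul_inv_smul₀ (ne_of_gt hNR),
        ← Finset.sum_sub_distrib]
    have expand : ∀ m, ‖G m - g‖ ^ 2 = ‖G m‖ ^ 2 - 2 * ⟪G m, g⟫ + ‖g‖ ^ 2 := by
      intro m
      rw [norm_sub_sq_real]
    have hsum : ∑ m, ‖G m - g‖ ^ 2
        = (∑ m, ‖G m‖ ^ 2) - 2 * ⟪∑ m, G m, g⟫ + (N:ℝ) * ‖g‖ ^ 2 := by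
      simp only [expand]
      rw [Finset.sum_add_distrib, Finset.sum_sub_distrib, ← Finset.mul_sum,
        sum_inner, Finset.sum_const, Finset.card_univ, Fintype.card_fin,
        nsmul_eq_mul]
    rw [hsum, hsumG, real_inner_smul_left, real_inner_self_eq_norm_sq]
    field_simp
    ring
  constructor
  · intro x
    rw [key x]
    have := hES x
    nlinarith [sq_nonneg ‖gradient (favg f) x - gradient (favg f) xstar‖]
  · intro μ hμ hPL x
    rw [key x]
    have h1 := hES x
    have h2 := hPL x
    rw [hzero, sub_zero]
    nlinarith
end
end
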